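/- There exist constants E > 0 and 0 < r, s < 1 such that for every K > 0, d ≥ 5, and t ∈ [-1/8, 1/8], the tail sum ∑_{n=K}^∞ |P_{d,n}(t)| ≤ E·r^K + E·s^d. -/

import Mathlib

/-- The `d`-dimensional Legendre polynomials, defined by the recursion
`P_{d,n}(x) = ((2n+d-4)/(n+d-3)) x P_{d,n-1}(x) - ((n-1)/(n+d-3)) P_{d,n-2}(x)`,
`P_{d,0} ≡ 1`, `P_{d,1}(x) = x`. -/
noncomputable def legendreP (d : ℕ) : ℕ → ℝ → ℝ
  | 0 => fun _ => 1
  | 1 => fun x => x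
  | n + 2 => fun x =>
      ((2 * (n : ℝ) + d) / ((n : ℝ) + d - 1)) * x * legendreP d (n + 1) x
        - (((n : ℝ) + 1) / ((n : ℝ) + d - 1)) * legendreP d n x

open Complex Real
set_option maxHeartbeats 1000000

theorem mygeom (x : ℝ) (h0 : 0 ≤ x) (h1 : x < 1) (n : ℕ) :
    ∑ i ∈ Finset.range n, x ^ i ≤ (1 - x)⁻¹ := by
  rw [geom_sum_eq (by linarith)]
  have h2 : (x ^ n - 1) / (x - 1) = (1 - x ^ n) / (1 - x) := by
    rw [div_eq_div_iff (by linarith) (by linarith)]; ring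
  rw [h2, inv_eq_one_div, div_le_div_iff₀ (by linarith) (by linarith)]
  nlinarith [pow_nonneg h0 n]

theorem ptid (n m : ℕ) (T U S C : ℂ) (hS : S^2 = 1 - C^2) (hU : U^2 = 1 - T^2) :
    ((n:ℂ) + m + 2) * ((T + U*I*C)^(n+2) * S^m)
      - (((2*n : ℂ) + m + 3) * T * ((T + U*I*C)^(n+1) * S^m) - ((n:ℂ)+1) * ((T + U*I*C)^n * S^m))
    = (U*I) * (((n:ℂ)+1) * (T + U*I*C)^n * (-(U*I*S)) * (S^m*S)
        + (T + U*I*C)^(n+1) * (((m:ℂ)+1) * S^m * C)) := by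
  linear_combination (((n:ℂ)+1) * S^m * (T+U*I*C)^n * U^2 * I^2) * hS
    + (((n:ℂ)+1) * S^m * (T+U*I*C)^n * I^2) * hU
    + (((n:ℂ)+1) * S^m * (T+U*I*C)^n * (1-T^2)) * Complex.I_sq

noncomputable def ZZ (t u θ : ℝ) : ℂ := (t:ℂ) + (u:ℂ) * I * (Real.cos θ : ℂ)

theorem mypow {f : ℝ → ℂ} {f' : ℂ} {x : ℝ} (h : HasDerivAt f f' x) (k : ℕ) :
    HasDerivAt (fun y => f y ^ (k+1)) (((k:ℂ)+1) * f x ^ k * f') x := by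
  induction k with
  | zero => simpa using h
  | succ k ih =>
      have h2 : HasDerivAt (fun y => f y ^ (k+1) * f y) _ x := ih.mul h
      have hfe : (fun y => f y ^ (k+1+1)) = fun y => f y ^ (k+1) * f y := by
        funext y; ring
      rw [hfe]
      convert h2 using 1
      push_cast; ring

theorem hzderiv (t u : ℝ) (θ : ℝ) :
    HasDerivAt (fun θ => ZZ t u θ) (-((u:ℂ)*I*(Real.sin θ:ℂ))) θ := by
  have h1 : HasDerivAt (fun y : ℝ => ((Real.cos y : ℝ) : ℂ)) ((-Real.sin θ : ℝ) : ℂ) θ :=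
    HasDerivAt.ofReal_comp (Real.hasDerivAt_cos θ)
  have h2 := h1.const_mul ((u:ℂ) * I)
  have h3 : HasDerivAt (fun y => ZZ t u y) _ θ := h2.const_add (t:ℂ)
  convert h3 using 1
  push_cast; ring

theorem hderiv (t u : ℝ) (n m : ℕ) (θ : ℝ) :
    HasDerivAt (fun θ => ZZ t u θ ^ (n+1) * ((Real.sin θ : ℂ)) ^ (m+1))
      (((n:ℂ)+1) * ZZ t u θ ^ n * (-((u:ℂ)*I*(Real.sin θ:ℂ))) * ((Real.sin θ:ℂ))^(m+1)
        + ZZ t u θ ^ (n+1) * (((m:ℂ)+1) * ((Real.sin θ:ℂ))^m * (Real.cos θ:ℂ))) θ := by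
  have hs : HasDerivAt (fun y : ℝ => ((Real.sin y : ℝ) : ℂ)) ((Real.cos θ : ℝ) : ℂ) θ :=
    HasDerivAt.ofReal_comp (Real.hasDerivAt_sin θ)
  exact (mypow (hzderiv t u θ) n).mul (mypow hs m)

noncomputable def FF (m : ℕ) (t u : ℝ) (k : ℕ) : ℂ :=
  ∫ θ in (0:ℝ)..π, ZZ t u θ ^ k * ((Real.sin θ : ℂ)) ^ m

theorem contZZ (t u : ℝ) : Continuous (fun θ => ZZ t u θ) := by
  unfold ZZ; fun_prop

theorem contF (t u : ℝ) (k m : ℕ) :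
    Continuous (fun θ => ZZ t u θ ^ k * ((Real.sin θ : ℂ)) ^ m) := by
  unfold ZZ; fun_prop

theorem recF (m n : ℕ) (t u : ℝ) (hu : u^2 = 1 - t^2) :
    ((n:ℂ) + m + 2) * FF m t u (n+2)
      = ((2*n : ℂ) + m + 3) * t * FF m t u (n+1) - ((n:ℂ)+1) * FF m t u n := by
  have hU : ((u:ℂ))^2 = 1 - ((t:ℂ))^2 := by exact_mod_cast hu
  set D : ℝ → ℂ := fun θ =>
    ((n:ℂ)+1) * ZZ t u θ ^ n * (-((u:ℂ)*I*(Real.sin θ:ℂ))) * ((Real.sin θ:ℂ))^(m+1)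
      + ZZ t u θ ^ (n+1) * (((m:ℂ)+1) * ((Real.sin θ:ℂ))^m * (Real.cos θ:ℂ)) with hD
  have contD : Continuous D := by rw [hD]; unfold ZZ; fun_prop
  have key : (∫ θ in (0:ℝ)..π, D θ) = 0 := by
    rw [intervalIntegral.integral_eq_sub_of_hasDerivAt
      (fun θ _ => hderiv t u n m θ) (contD.intervalIntegrable 0 π)]
    simp [Real.sin_pi]
  have hcomb : (∫ θ in (0:ℝ)..π,
      (((n:ℂ) + m + 2) * (ZZ t u θ^(n+2) * ((Real.sin θ:ℂ))^m)
        - (((2*n : ℂ) + m + 3) * t * (ZZ t u θ^(n+1) * ((Real.sin θ:ℂ))^m)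
          - ((n:ℂ)+1) * (ZZ t u θ^n * ((Real.sin θ:ℂ))^m)))) = 0 := by
    have : ∀ θ : ℝ,
        (((n:ℂ) + m + 2) * (ZZ t u θ^(n+2) * ((Real.sin θ:ℂ))^m)
        - (((2*n : ℂ) + m + 3) * t * (ZZ t u θ^(n+1) * ((Real.sin θ:ℂ))^m)
          - ((n:ℂ)+1) * (ZZ t u θ^n * ((Real.sin θ:ℂ))^m))) = ((u:ℂ)*I) * D θ := by
      intro θ
      have hS : ((Real.sin θ:ℂ))^2 = 1 - ((Real.cos θ:ℂ))^2 := by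
        have := Real.sin_sq_add_cos_sq θ
        have h2 : (Real.sin θ)^2 = 1 - (Real.cos θ)^2 := by linarith
        exact_mod_cast h2
      rw [hD]
      exact ptid n m _ _ _ _ hS hU
    rw [intervalIntegral.integral_congr (fun θ _ => this θ),
      intervalIntegral.integral_const_mul, key, mul_zero]
  have e1 : IntervalIntegrable (fun θ => ((n:ℂ) + m + 2) * (ZZ t u θ^(n+2) * ((Real.sin θ:ℂ))^m))
      MeasureTheory.volume 0 π := ((continuous_const.mul (contF t u (n+2) m)).intervalIntegrable 0 π)
  have e2 : IntervalIntegrable (fun θ => ((2*n : ℂ) + m + 3) * t * (ZZ t u θ^(n+1) * ((Real.sin θ:ℂ))^m))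
      MeasureTheory.volume 0 π := ((continuous_const.mul (contF t u (n+1) m)).intervalIntegrable 0 π)
  have e3 : IntervalIntegrable (fun θ => ((n:ℂ)+1) * (ZZ t u θ^n * ((Real.sin θ:ℂ))^m))
      MeasureTheory.volume 0 π := ((continuous_const.mul (contF t u n m)).intervalIntegrable 0 π)
  rw [intervalIntegral.integral_sub e1 (e2.sub e3), intervalIntegral.integral_sub e2 e3,
    intervalIntegral.integral_const_mul, intervalIntegral.integral_const_mul,
    intervalIntegral.integral_const_mul] at hcomb
  unfold FF
  linear_combination hcomb

theorem cos_sin_int (m : ℕ) : (∫ θ in (0:ℝ)..π, Real.cos θ * Real.sin θ ^ m) = 0 := by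
  have h : ∀ θ ∈ Set.uIcc (0:ℝ) π, HasDerivAt (fun x => Real.sin x ^ (m+1))
      (((m:ℝ)+1) * (Real.cos θ * Real.sin θ ^ m)) θ := by
    intro θ _
    have : HasDerivAt (fun x => Real.sin x ^ (m+1)) _ θ := (Real.hasDerivAt_sin θ).pow (m+1)
    simpa [Nat.add_sub_cancel, mul_comm, mul_assoc, mul_left_comm] using this
  have hcont : Continuous fun θ => ((m:ℝ)+1) * (Real.cos θ * Real.sin θ ^ m) := by fun_prop
  have key := intervalIntegral.integral_eq_sub_of_hasDerivAt h (hcont.intervalIntegrable 0 π)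
  rw [intervalIntegral.integral_const_mul] at key
  simp [Real.sin_pi] at key
  rcases key with h1 | h1
  · exact absurd h1 (by positivity)
  · exact h1

theorem FF0 (m : ℕ) (t u : ℝ) : FF m t u 0 = ((∫ θ in (0:ℝ)..π, Real.sin θ ^ m : ℝ) : ℂ) := by
  unfold FF
  rw [← intervalIntegral.integral_ofReal]
  apply intervalIntegral.integral_congr
  intro θ _
  push_cast
  ring

theorem FF1 (m : ℕ) (t u : ℝ) :
    FF m t u 1 = (t:ℂ) * ((∫ θ in (0:ℝ)..π, Real.sin θ ^ m : ℝ) : ℂ) := by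
  unfold FF
  have hsplit : (fun θ => ZZ t u θ ^ 1 * ((Real.sin θ:ℂ))^m)
      = fun θ => (t:ℂ) * (((Real.sin θ ^ m : ℝ)) : ℂ)
          + ((u:ℂ) * I) * (((Real.cos θ * Real.sin θ ^ m : ℝ)) : ℂ) := by
    funext θ; unfold ZZ; push_cast; ring
  rw [hsplit]
  have i1 : IntervalIntegrable (fun θ : ℝ => (t:ℂ) * (((Real.sin θ ^ m : ℝ)) : ℂ))
      MeasureTheory.volume 0 π := by
    apply Continuous.intervalIntegrable; fun_prop
  have i2 : IntervalIntegrable (fun θ : ℝ => ((u:ℂ) * I) * (((Real.cos θ * Real.sin θ ^ m : ℝ)) : ℂ))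
      MeasureTheory.volume 0 π := by
    apply Continuous.intervalIntegrable; fun_prop
  rw [intervalIntegral.integral_add i1 i2, intervalIntegral.integral_const_mul,
    intervalIntegral.integral_const_mul, intervalIntegral.integral_ofReal,
    intervalIntegral.integral_ofReal, cos_sin_int]
  simp

theorem legFF (p : ℕ) (t u : ℝ) (hu : u^2 = 1 - t^2) (n : ℕ) :
    (legendreP (p+5) n t : ℂ) * ((∫ θ in (0:ℝ)..π, Real.sin θ ^ (p+2) : ℝ) : ℂ)
      = FF (p+2) t u n := by
  set Jv := (∫ θ in (0:ℝ)..π, Real.sin θ ^ (p+2) : ℝ) with hJ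
  induction n using Nat.twoStepInduction with
  | zero => rw [FF0]; simp [legendreP, hJ]
  | one => rw [FF1]; simp [legendreP, hJ]
  | more n ih1 ih2 =>
      have hrec := recF (p+2) n t u hu
      push_cast at hrec
      have hne : ((n:ℂ) + (p:ℂ) + 4) ≠ 0 := by
        rw [show ((n:ℂ) + (p:ℂ) + 4) = (((n:ℝ) + (p:ℝ) + 4 : ℝ) : ℂ) by push_cast; ring]
        rw [Complex.ofReal_ne_zero]
        positivity
      have hner : ((n:ℝ) + ((p+5:ℕ):ℝ) - 1) ≠ 0 := by
        push_cast
        intro h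
        have h1 : (0:ℝ) ≤ n := n.cast_nonneg
        have h2 : (0:ℝ) ≤ p := p.cast_nonneg
        linarith
      have hunfold : legendreP (p+5) (n+2) t
          = ((2 * (n : ℝ) + ((p+5:ℕ):ℝ)) / ((n : ℝ) + ((p+5:ℕ):ℝ) - 1)) * t * legendreP (p+5) (n + 1) t
            - (((n : ℝ) + 1) / ((n : ℝ) + ((p+5:ℕ):ℝ) - 1)) * legendreP (p+5) n t := rfl
      have hrec' : FF (p+2) t u (n+2) * ((n:ℂ) + (p:ℂ) + 4)
          = (2*(n:ℂ) + (p:ℂ) + 5) * t * FF (p+2) t u (n+1) - ((n:ℂ)+1) * FF (p+2) t u n := by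
        linear_combination hrec
      have expandR : legendreP (p+5) (n+2) t * Jv * ((n:ℝ)+(p:ℝ)+4)
          = (2*(n:ℝ)+(p:ℝ)+5) * t * (legendreP (p+5) (n+1) t * Jv)
            - ((n:ℝ)+1) * (legendreP (p+5) n t * Jv) := by
        rw [hunfold]
        push_cast at hner ⊢
        field_simp
        ring
      have hc : ((legendreP (p+5) (n+2) t : ℂ) * (Jv:ℂ)) * ((n:ℂ)+(p:ℂ)+4)
          = (2*(n:ℂ) + (p:ℂ) + 5) * t * FF (p+2) t u (n+1) - ((n:ℂ)+1) * FF (p+2) t u n := by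
        rw [← ih1, ← ih2]
        have h := congrArg (Complex.ofReal) expandR
        push_cast at h
        linear_combination h
      exact mul_right_cancel₀ hne (hc.trans hrec'.symm)

theorem normZ_sq (t u θ : ℝ) (hu : u^2 = 1-t^2) :
    ‖ZZ t u θ‖^2 = 1 - u^2 * Real.sin θ^2 := by
  have h1 : ZZ t u θ = (t:ℂ) + ((u * Real.cos θ : ℝ):ℂ) * I := by
    unfold ZZ; push_cast; ring
  rw [h1, Complex.sq_norm, Complex.normSq_add_mul_I]
  have hsc := Real.sin_sq_add_cos_sq θ
  nlinarith [hsc]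

theorem J0_pos (m : ℕ) : 0 < ∫ θ in (0:ℝ)..π, Real.sin θ ^ m := by
  apply intervalIntegral.intervalIntegral_pos_of_pos_on
  · exact (Real.continuous_sin.pow m).intervalIntegrable 0 π
  · intro x hx
    exact pow_pos (Real.sin_pos_of_pos_of_lt_pi hx.1 hx.2) m
  · exact Real.pi_pos

theorem sin_ge_on_mid {θ : ℝ} (h1 : π/3 ≤ θ) (h2 : θ ≤ 2*π/3) :
    Real.sqrt 3 / 2 ≤ Real.sin θ := by
  have key : Real.cos (π/6) ≤ Real.cos |π/2 - θ| := by
    apply Real.cos_le_cos_of_nonneg_of_le_pi (abs_nonneg _)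
    · linarith [Real.pi_pos]
    · rw [abs_le]; constructor <;> linarith
  rw [Real.cos_abs, Real.cos_pi_div_two_sub, Real.cos_pi_div_six] at key
  exact key

theorem J0_ge (m : ℕ) : (π/3) * (Real.sqrt 3 / 2)^m ≤ ∫ θ in (0:ℝ)..π, Real.sin θ ^ m := by
  have hii : ∀ a b : ℝ, IntervalIntegrable (fun θ => Real.sin θ ^ m) MeasureTheory.volume a b :=
    fun a b => (Real.continuous_sin.pow m).intervalIntegrable a b
  have hsplit : (∫ θ in (0:ℝ)..π, Real.sin θ ^ m)
      = (∫ θ in (0:ℝ)..(π/3), Real.sin θ ^ m) + (∫ θ in (π/3)..(2*π/3), Real.sin θ ^ m)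
        + (∫ θ in (2*π/3)..π, Real.sin θ ^ m) := by
    rw [intervalIntegral.integral_add_adjacent_intervals (hii 0 (π/3)) (hii (π/3) (2*π/3)),
      intervalIntegral.integral_add_adjacent_intervals (hii 0 (2*π/3)) (hii (2*π/3) π)]
  have hpi := Real.pi_pos
  have h1 : (0:ℝ) ≤ ∫ θ in (0:ℝ)..(π/3), Real.sin θ ^ m := by
    apply intervalIntegral.integral_nonneg (by linarith)
    intro x hx
    exact pow_nonneg (Real.sin_nonneg_of_nonneg_of_le_pi hx.1 (by rcases hx with ⟨_,h⟩; linarith)) m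
  have h3 : (0:ℝ) ≤ ∫ θ in (2*π/3)..π, Real.sin θ ^ m := by
    apply intervalIntegral.integral_nonneg (by linarith)
    intro x hx
    exact pow_nonneg (Real.sin_nonneg_of_nonneg_of_le_pi (by rcases hx with ⟨h,_⟩; linarith) hx.2) m
  have h2 : (π/3) * (Real.sqrt 3 / 2)^m ≤ ∫ θ in (π/3)..(2*π/3), Real.sin θ ^ m := by
    have hc : (∫ _ in (π/3)..(2*π/3), (Real.sqrt 3 / 2)^m) = (π/3) * (Real.sqrt 3/2)^m := by
      rw [intervalIntegral.integral_const, smul_eq_mul]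
      ring_nf
    rw [← hc]
    apply intervalIntegral.integral_mono_on (by linarith)
      (intervalIntegrable_const) (hii _ _)
    intro x hx
    exact pow_le_pow_left₀ (by positivity) (sin_ge_on_mid hx.1 hx.2) m
  linarith [hsplit]

theorem normFF_le (m k : ℕ) (t u : ℝ) :
    ‖FF m t u k‖ ≤ ∫ θ in (0:ℝ)..π, ‖ZZ t u θ‖^k * Real.sin θ^m := by
  refine (intervalIntegral.norm_integral_le_integral_norm Real.pi_pos.le).trans_eq ?_
  apply intervalIntegral.integral_congr
  intro θ hθ
  rw [Set.uIcc_of_le Real.pi_pos.le] at hθ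
  have hs : 0 ≤ Real.sin θ := Real.sin_nonneg_of_nonneg_of_le_pi hθ.1 hθ.2
  show ‖ZZ t u θ ^ k * ((Real.sin θ:ℂ))^m‖ = ‖ZZ t u θ‖^k * Real.sin θ^m
  rw [norm_mul, norm_pow, norm_pow, Complex.norm_real, Real.norm_eq_abs, _root_.abs_of_nonneg hs]

theorem stmt2 :
    ∃ E > (0 : ℝ), ∃ r ∈ Set.Ioo (0 : ℝ) 1, ∃ s ∈ Set.Ioo (0 : ℝ) 1,
      ∀ (K d : ℕ), 0 < K → 5 ≤ d → ∀ t : ℝ, |t| ≤ 1 / 8 →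
        ∑' n : ℕ, |legendreP d (K + n) t| ≤ E * r ^ K + E * s ^ d := by
  refine ⟨100, by norm_num, 3/4, ⟨by norm_num, by norm_num⟩, 5/6, ⟨by norm_num, by norm_num⟩, ?_⟩
  intro K d hK hd t ht
  obtain ⟨p, rfl⟩ : ∃ p, d = p + 5 := ⟨d - 5, by omega⟩
  have ht2 : t^2 ≤ 1/64 := by nlinarith [_root_.sq_abs t, abs_nonneg t]
  have h1t : (0:ℝ) ≤ 1 - t^2 := by nlinarith
  set u := Real.sqrt (1 - t^2) with hudef
  have hu2 : u^2 = 1 - t^2 := Real.sq_sqrt h1t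
  have hu2ge : (63:ℝ)/64 ≤ u^2 := by rw [hu2]; linarith
  have hu2pos : (0:ℝ) < u^2 := by linarith
  set J0 := (∫ θ in (0:ℝ)..π, Real.sin θ ^ (p+2) : ℝ) with hJ0def
  have hJpos : 0 < J0 := J0_pos _
  have hpi := Real.pi_pos
  set B : ℝ := (2 / u^2) * (Real.sqrt 2 / 2)^p with hBdef
  have hBnn : 0 ≤ B := by positivity
  -- pointwise bound on the partial geometric sums
  have hpoint : ∀ N : ℕ, ∀ θ ∈ Set.Icc (0:ℝ) π,
      (∑ n ∈ Finset.range N, ‖ZZ t u θ‖^(K+n) * Real.sin θ^(p+2))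
        ≤ 4 * (3/4:ℝ)^K * Real.sin θ^(p+2) + B := by
    intro N θ hθ
    have hs0 : 0 ≤ Real.sin θ := Real.sin_nonneg_of_nonneg_of_le_pi hθ.1 hθ.2
    have hzn : (0:ℝ) ≤ ‖ZZ t u θ‖ := norm_nonneg _
    have hzsq : ‖ZZ t u θ‖^2 = 1 - u^2 * Real.sin θ^2 := normZ_sq t u θ hu2
    rw [← Finset.sum_mul]
    by_cases hcase : Real.sqrt 2 / 2 ≤ Real.sin θ
    · have hsq2 : (Real.sqrt 2 / 2)^2 = 1/2 := by
        rw [div_pow, Real.sq_sqrt (by norm_num : (0:ℝ) ≤ 2)]; norm_num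
      have hz34 : ‖ZZ t u θ‖ ≤ 3/4 := by
        have hsin2 : (1:ℝ)/2 ≤ Real.sin θ^2 := by
          rw [← hsq2]; exact pow_le_pow_left₀ (by positivity) hcase 2
        nlinarith
      have hsum : (∑ n ∈ Finset.range N, ‖ZZ t u θ‖^(K+n)) ≤ 4 * (3/4:ℝ)^K := by
        calc ∑ n ∈ Finset.range N, ‖ZZ t u θ‖^(K+n)
            ≤ ∑ n ∈ Finset.range N, (3/4:ℝ)^(K+n) :=
              Finset.sum_le_sum fun n _ => pow_le_pow_left₀ hzn hz34 _
          _ = (3/4:ℝ)^K * ∑ n ∈ Finset.range N, (3/4:ℝ)^n := by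
              rw [Finset.mul_sum]; exact Finset.sum_congr rfl fun n _ => pow_add _ _ _
          _ ≤ (3/4:ℝ)^K * (1 - 3/4:ℝ)⁻¹ :=
              mul_le_mul_of_nonneg_left (mygeom (3/4) (by norm_num) (by norm_num) N)
                (by positivity)
          _ = 4 * (3/4:ℝ)^K := by norm_num; ring
      have hm := mul_le_mul_of_nonneg_right hsum (pow_nonneg hs0 (p+2))
      linarith [hm]
    · push_neg at hcase
      rcases eq_or_lt_of_le hs0 with h0 | hspos
      · rw [← h0]
        simp only [ne_eq, zero_pow (by omega : (p+2) ≠ 0), mul_zero, Finset.sum_const_zero]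
        positivity
      · have hzlt : ‖ZZ t u θ‖ < 1 := by nlinarith
        have h1z : u^2 * Real.sin θ^2/2 ≤ 1 - ‖ZZ t u θ‖ := by nlinarith
        have hgs : (∑ n ∈ Finset.range N, ‖ZZ t u θ‖^(K+n)) ≤ (1 - ‖ZZ t u θ‖)⁻¹ := by
          calc ∑ n ∈ Finset.range N, ‖ZZ t u θ‖^(K+n)
              ≤ ∑ n ∈ Finset.range N, ‖ZZ t u θ‖^n :=
                Finset.sum_le_sum fun n _ =>
                  pow_le_pow_of_le_one hzn hzlt.le (by omega)
            _ ≤ _ := mygeom _ hzn hzlt N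
        have hpos2 : (0:ℝ) < u^2 * Real.sin θ^2/2 := by positivity
        have hinv : (1 - ‖ZZ t u θ‖)⁻¹ ≤ 2/(u^2 * Real.sin θ^2) := by
          calc (1 - ‖ZZ t u θ‖)⁻¹ ≤ (u^2 * Real.sin θ^2/2)⁻¹ := by
                apply inv_anti₀ hpos2 h1z
            _ = 2/(u^2 * Real.sin θ^2) := by rw [inv_div]
        have hsne : Real.sin θ ≠ 0 := ne_of_gt hspos
        calc (∑ n ∈ Finset.range N, ‖ZZ t u θ‖^(K+n)) * Real.sin θ^(p+2)
            ≤ (2/(u^2 * Real.sin θ^2)) * Real.sin θ^(p+2) :=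
              mul_le_mul_of_nonneg_right (hgs.trans hinv) (pow_nonneg hs0 _)
          _ = (2/u^2) * Real.sin θ^p := by
              rw [pow_add]; field_simp
          _ ≤ B := by
              rw [hBdef]
              exact mul_le_mul_of_nonneg_left
                (pow_le_pow_left₀ hs0 hcase.le p) (by positivity)
          _ ≤ 4 * (3/4:ℝ)^K * Real.sin θ^(p+2) + B := by
              have : (0:ℝ) ≤ 4 * (3/4:ℝ)^K * Real.sin θ^(p+2) := by positivity
              linarith
  -- bound on every partial sum of the series
  have key : ∀ N : ℕ, (∑ n ∈ Finset.range N, |legendreP (p+5) (K+n) t|)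
      ≤ 4 * (3/4:ℝ)^K + π * B / J0 := by
    intro N
    have hPeq : ∀ k : ℕ, |legendreP (p+5) k t| = ‖FF (p+2) t u k‖ / J0 := by
      intro k
      rw [eq_div_iff hJpos.ne']
      rw [← legFF p t u hu2 k, norm_mul, Complex.norm_real, Complex.norm_real,
        Real.norm_eq_abs, Real.norm_eq_abs, _root_.abs_of_pos hJpos]
    have hcont : ∀ i : ℕ, Continuous fun θ => ‖ZZ t u θ‖^(K+i) * Real.sin θ^(p+2) :=
      fun i => (((contZZ t u).norm.pow _).mul (Real.continuous_sin.pow _))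
    have hnum : (∑ n ∈ Finset.range N, ‖FF (p+2) t u (K+n)‖)
        ≤ 4 * (3/4:ℝ)^K * J0 + π * B := by
      have int1 : IntervalIntegrable
          (fun θ => ∑ n ∈ Finset.range N, ‖ZZ t u θ‖^(K+n) * Real.sin θ^(p+2))
          MeasureTheory.volume 0 π :=
        ((continuous_finset_sum _ fun i _ => hcont i).intervalIntegrable 0 π)
      have int2 : IntervalIntegrable
          (fun θ : ℝ => 4 * (3/4:ℝ)^K * Real.sin θ^(p+2) + B) MeasureTheory.volume 0 π :=
        (((continuous_const.mul (Real.continuous_sin.pow _)).add continuous_const).intervalIntegrable 0 π)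
      calc ∑ n ∈ Finset.range N, ‖FF (p+2) t u (K+n)‖
          ≤ ∑ n ∈ Finset.range N, ∫ θ in (0:ℝ)..π, ‖ZZ t u θ‖^(K+n) * Real.sin θ^(p+2) :=
            Finset.sum_le_sum fun n _ => normFF_le _ _ _ _
        _ = ∫ θ in (0:ℝ)..π, ∑ n ∈ Finset.range N, ‖ZZ t u θ‖^(K+n) * Real.sin θ^(p+2) :=
            (intervalIntegral.integral_finset_sum fun i _ => ((hcont i).intervalIntegrable 0 π)).symm
        _ ≤ ∫ θ in (0:ℝ)..π, (4 * (3/4:ℝ)^K * Real.sin θ^(p+2) + B) :=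
            intervalIntegral.integral_mono_on Real.pi_pos.le int1 int2 (hpoint N)
        _ = 4 * (3/4:ℝ)^K * J0 + π * B := by
            rw [intervalIntegral.integral_add (f := fun θ : ℝ => 4 * (3/4:ℝ)^K * Real.sin θ^(p+2))
                (g := fun _ => B)
                ((continuous_const.mul (Real.continuous_sin.pow _)).intervalIntegrable 0 π)
                (intervalIntegrable_const),
              intervalIntegral.integral_const_mul, intervalIntegral.integral_const,
              smul_eq_mul, sub_zero, ← hJ0def]
    calc ∑ n ∈ Finset.range N, |legendreP (p+5) (K+n) t|
        = (∑ n ∈ Finset.range N, ‖FF (p+2) t u (K+n)‖) / J0 := by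
          rw [Finset.sum_div]; exact Finset.sum_congr rfl fun n _ => hPeq _
      _ ≤ (4 * (3/4:ℝ)^K * J0 + π * B) / J0 := by
          apply div_le_div_of_nonneg_right hnum hJpos.le
      _ = 4 * (3/4:ℝ)^K + π * B / J0 := by field_simp
  -- numeric endgame
  have hs2le : Real.sqrt 2 ≤ 1.42 := by
    rw [show (1.42:ℝ) = Real.sqrt (1.42^2) from (Real.sqrt_sq (by norm_num)).symm]
    apply Real.sqrt_le_sqrt; norm_num
  have hs3ge : (1.73:ℝ) ≤ Real.sqrt 3 := by
    rw [show (1.73:ℝ) = Real.sqrt (1.73^2) from (Real.sqrt_sq (by norm_num)).symm]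
    apply Real.sqrt_le_sqrt; norm_num
  have hsqrt : Real.sqrt 2 / 2 ≤ 5 * Real.sqrt 3 / 12 := by linarith
  have hpowle : (Real.sqrt 2/2)^p ≤ (5*Real.sqrt 3/12)^p :=
    pow_le_pow_left₀ (by positivity) hsqrt p
  have hfin2 : π * B / J0 ≤ 100 * (5/6:ℝ)^(p+5) := by
    rw [div_le_iff₀ hJpos]
    have hJge' := J0_ge (p+2)
    rw [← hJ0def] at hJge'
    have h34 : (Real.sqrt 3/2)^2 = 3/4 := by
      rw [div_pow, Real.sq_sqrt (by norm_num : (0:ℝ) ≤ 3)]; norm_num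
    have he : 100 * (5/6:ℝ)^(p+5) * ((π/3) * (Real.sqrt 3/2)^(p+2))
        = π * ((312500/31104) * (5*Real.sqrt 3/12)^p) := by
      rw [pow_add, pow_add, h34,
        show (5*Real.sqrt 3/12:ℝ)^p = (5/6:ℝ)^p * (Real.sqrt 3/2)^p by
          rw [← mul_pow]; ring_nf]
      ring_nf
    have hstep : π * B ≤ 100 * (5/6:ℝ)^(p+5) * ((π/3) * (Real.sqrt 3/2)^(p+2)) := by
      rw [he]
      apply mul_le_mul_of_nonneg_left _ hpi.le
      calc B = (2/u^2) * (Real.sqrt 2/2)^p := hBdef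
        _ ≤ (128/63) * (Real.sqrt 2/2)^p := by
            apply mul_le_mul_of_nonneg_right _ (by positivity)
            rw [div_le_div_iff₀ hu2pos (by norm_num)]
            linarith
        _ ≤ (128/63) * (5*Real.sqrt 3/12)^p :=
            mul_le_mul_of_nonneg_left hpowle (by norm_num)
        _ ≤ (312500/31104) * (5*Real.sqrt 3/12)^p :=
            mul_le_mul_of_nonneg_right (by norm_num) (by positivity)
    calc π * B ≤ 100 * (5/6:ℝ)^(p+5) * ((π/3) * (Real.sqrt 3/2)^(p+2)) := hstep
      _ ≤ 100 * (5/6:ℝ)^(p+5) * J0 :=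
          mul_le_mul_of_nonneg_left hJge' (by positivity)
  by_cases hsm : Summable (fun n : ℕ => |legendreP (p+5) (K+n) t|)
  · apply Summable.tsum_le_of_sum_le hsm
    intro s
    obtain ⟨N, hN⟩ := s.exists_nat_subset_range
    calc ∑ i ∈ s, |legendreP (p+5) (K+i) t|
        ≤ ∑ n ∈ Finset.range N, |legendreP (p+5) (K+n) t| :=
          Finset.sum_le_sum_of_subset_of_nonneg hN (fun i _ _ => abs_nonneg _)
      _ ≤ 4 * (3/4:ℝ)^K + π * B / J0 := key N
      _ ≤ 100 * (3/4:ℝ)^K + 100 * (5/6:ℝ)^(p+5) := by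
          have h1 : 4*(3/4:ℝ)^K ≤ 100*(3/4:ℝ)^K := by
            nlinarith [pow_nonneg (show (0:ℝ) ≤ 3/4 by norm_num) K]
          linarith
  · rw [tsum_eq_zero_of_not_summable hsm]
    positivity
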